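/- arXiv:1103.3626 — 2 statements merged into one kernel-verified Lean document; each statement's English description precedes it below -/
import Mathlib

section
/- Let v = 3m be odd and a_i, b_i ∈ {-1,1} with PSD_A(s)+PSD_B(s) = 2v-2 for all s = 1,...,v-1 and = 4v-2 at s = 0. Setting A_j = Σ_{i=0}^{m-1} a_{3i+j} and B_j = Σ_{i=0}^{m-1} b_{3i+j} for j = 0,1,2, one has A_0² + A_1² + A_2² + B_0² + B_1² + B_2² = 8m - 2. -/
noncomputable def PSD (v : ℕ) (x : ℕ → ℝ) (k : ℕ) : ℝ :=
  ‖(∑ α ∈ Finset.range v, (x α : ℂ)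
    * Complex.exp (2 * (Real.pi : ℂ) * Complex.I * α * k / v))‖ ^ 2

lemma sum_range_three_mul {M : Type*} [AddCommMonoid M] (m : ℕ) (f : ℕ → M) :
    ∑ α ∈ Finset.range (3*m), f α
      = ∑ i ∈ Finset.range m, (f (3*i) + f (3*i+1) + f (3*i+2)) := by
  induction m with
  | zero => simp
  | succ n ih =>
      have h3 : 3 * (n+1) = (3*n + 1) + 1 + 1 := by ring
      rw [h3, Finset.sum_range_succ, Finset.sum_range_succ, Finset.sum_range_succ, ih,
        Finset.sum_range_succ]
      abel

lemma psd_zero (v : ℕ) (x : ℕ → ℝ) :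
    PSD v x 0 = (∑ α ∈ Finset.range v, x α) ^ 2 := by
  unfold PSD
  have h : ∀ α ∈ Finset.range v, (x α : ℂ)
      * Complex.exp (2 * (Real.pi : ℂ) * Complex.I * α * (0:ℕ) / v) = (x α : ℂ) := by
    intro α _
    norm_num
  rw [Finset.sum_congr rfl h]
  push_cast
  rw [← Complex.ofReal_sum]
  rw [Complex.norm_real, Real.norm_eq_abs, sq_abs]

lemma psd_third (m : ℕ) (hm : 0 < m) (x : ℕ → ℝ)
    (X : ℕ → ℝ) (hX : ∀ j, X j = ∑ i ∈ Finset.range m, x (3*i+j)) :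
    PSD (3*m) x m
      = X 0 ^ 2 + X 1 ^ 2 + X 2 ^ 2 - X 0 * X 1 - X 1 * X 2 - X 2 * X 0 := by
  have hmC : (m:ℂ) ≠ 0 := Nat.cast_ne_zero.mpr hm.ne'
  set ω : ℂ := Complex.exp ((2 * Real.pi / 3 : ℝ) * Complex.I) with hω
  have hexp : ∀ α : ℕ,
      Complex.exp (2 * (Real.pi:ℂ) * Complex.I * α * m / ((3*m : ℕ):ℂ)) = ω ^ α := by
    intro α
    rw [hω, ← Complex.exp_nat_mul]
    congr 1
    push_cast
    field_simp
  have hω3 : ω ^ 3 = 1 := by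
    rw [hω, ← Complex.exp_nat_mul, ← Complex.exp_two_pi_mul_I]
    congr 1
    push_cast
    ring
  have hcos : Real.cos (2 * Real.pi / 3) = -(1/2) := by
    have h : (2 * Real.pi / 3) = Real.pi - Real.pi / 3 := by ring
    rw [h, Real.cos_pi_sub, Real.cos_pi_div_three]
  have hsin : Real.sin (2 * Real.pi / 3) = Real.sqrt 3 / 2 := by
    have h : (2 * Real.pi / 3) = Real.pi - Real.pi / 3 := by ring
    rw [h, Real.sin_pi_sub, Real.sin_pi_div_three]
  have hωval : ω = Complex.ofReal (-(1/2)) + Complex.ofReal (Real.sqrt 3 / 2) * Complex.I := by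
    rw [hω, Complex.exp_mul_I, ← Complex.ofReal_cos, ← Complex.ofReal_sin, hcos, hsin]
  have hsum : ∑ α ∈ Finset.range (3*m), (x α : ℂ)
      * Complex.exp (2 * (Real.pi:ℂ) * Complex.I * α * m / ((3*m : ℕ):ℂ))
      = (X 0 : ℂ) + (X 1 : ℂ) * ω + (X 2 : ℂ) * ω ^ 2 := by
    simp only [hexp]
    rw [sum_range_three_mul]
    have hpow : ∀ i j : ℕ, ω ^ (3*i+j) = ω ^ j := by
      intro i j
      rw [pow_add, pow_mul, hω3, one_pow, one_mul]
    have : ∀ i ∈ Finset.range m,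
        ((x (3*i) : ℂ) * ω ^ (3*i) + (x (3*i+1) : ℂ) * ω ^ (3*i+1)
          + (x (3*i+2) : ℂ) * ω ^ (3*i+2))
        = (x (3*i) : ℂ) + (x (3*i+1) : ℂ) * ω + (x (3*i+2) : ℂ) * ω ^ 2 := by
      intro i _
      have h0 : ω ^ (3*i) = 1 := by rw [pow_mul, hω3, one_pow]
      rw [h0, hpow i 1, hpow i 2]
      ring
    rw [Finset.sum_congr rfl this]
    rw [Finset.sum_add_distrib, Finset.sum_add_distrib, ← Finset.sum_mul, ← Finset.sum_mul]
    rw [hX 0, hX 1, hX 2]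
    push_cast
    simp
  unfold PSD
  rw [hsum, Complex.sq_norm, Complex.normSq_apply, hωval]
  have h3 : Real.sqrt 3 ^ 2 = 3 := Real.sq_sqrt (by norm_num)
  simp only [Complex.add_re, Complex.add_im, Complex.mul_re, Complex.mul_im,
    Complex.ofReal_re, Complex.ofReal_im, Complex.I_re, Complex.I_im,
    pow_two, Complex.mul_re, Complex.mul_im]
  have h4 : Real.sqrt 3 ^ 4 = 9 := by
    rw [show (4:ℕ) = 2*2 from rfl, pow_mul, h3]; norm_num
  ring_nf
  simp only [h3, h4]
  ring

/-- Vertical constraint for `v = 3m`. -/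
theorem stmt8 (v m : ℕ) (hv : Odd v) (hv0 : 0 < v) (hdm : v = 3 * m)
    (a b : ℕ → ℝ)
    (ha : ∀ i, a i = -1 ∨ a i = 1) (hb : ∀ i, b i = -1 ∨ b i = 1)
    (hpsd : ∀ s : ℕ, 1 ≤ s → s ≤ v - 1 → PSD v a s + PSD v b s = 2 * v - 2)
    (hpsd0 : PSD v a 0 + PSD v b 0 = 4 * v - 2)
    (A B : ℕ → ℝ)
    (hA : ∀ j, A j = ∑ i ∈ Finset.range m, a (3 * i + j))
    (hB : ∀ j, B j = ∑ i ∈ Finset.range m, b (3 * i + j)) :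
    A 0 ^ 2 + A 1 ^ 2 + A 2 ^ 2 + B 0 ^ 2 + B 1 ^ 2 + B 2 ^ 2 = 8 * m - 2 := by
  have hm : 0 < m := by omega
  have h1 : PSD v a m + PSD v b m = 2 * v - 2 :=
    hpsd m (by omega) (by omega)
  rw [hdm] at h1
  rw [psd_third m hm a A hA, psd_third m hm b B hB] at h1
  rw [psd_zero, psd_zero] at hpsd0
  have hsa : ∑ α ∈ Finset.range v, a α = A 0 + A 1 + A 2 := by
    rw [hdm, sum_range_three_mul, Finset.sum_add_distrib, Finset.sum_add_distrib,
      hA 0, hA 1, hA 2]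
    simp
  have hsb : ∑ α ∈ Finset.range v, b α = B 0 + B 1 + B 2 := by
    rw [hdm, sum_range_three_mul, Finset.sum_add_distrib, Finset.sum_add_distrib,
      hB 0, hB 1, hB 2]
    simp
  rw [hsa, hsb] at hpsd0
  have hvr : (v : ℝ) = 3 * m := by exact_mod_cast congrArg (Nat.cast : ℕ → ℝ) hdm
  rw [hvr] at hpsd0
  push_cast at h1
  linear_combination (2/3 : ℝ) * h1 + (1/3 : ℝ) * hpsd0
end

section
/- Let v = 3d be odd and a_i, b_i ∈ {-1,1} with PSD_A(s)+PSD_B(s) = 2v-2 for all s = 1,...,v-1 and = 4v-2 at s = 0. Setting A_i = a_i + a_{i+d} + a_{i+2d} and B_i = b_i + b_{i+d} + b_{i+2d} for i = 0,...,d-1, one has Σ_{i=0}^{d-1} (A_i² + B_i²) = 2v + 4. -/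
open Finset

lemma orth (d : ℕ) (hd : 0 < d) (m : ℤ) (hm : ¬ ((d:ℤ) ∣ m)) :
    ∑ t ∈ Finset.range d, Complex.exp (2 * (Real.pi:ℂ) * Complex.I * m / d) ^ t = 0 := by
  have hd' : (d:ℂ) ≠ 0 := Nat.cast_ne_zero.mpr hd.ne'
  have hpi : (2 * (Real.pi:ℂ) * Complex.I) ≠ 0 := by
    simp [Real.pi_ne_zero, Complex.I_ne_zero, Complex.ofReal_ne_zero]
  have hz : Complex.exp (2 * (Real.pi:ℂ) * Complex.I * m / d) ≠ 1 := by
    rw [Ne, Complex.exp_eq_one_iff]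
    rintro ⟨n, hn⟩
    apply hm ⟨n, ?_⟩
    have h2 : (m : ℂ) = (d:ℂ) * n := by
      field_simp at hn
      have h3 : (m : ℂ) * (2 * (Real.pi:ℂ) * Complex.I) = ((d:ℂ) * n) * (2 * (Real.pi:ℂ) * Complex.I) := by
        linear_combination (2 * (Real.pi:ℂ) * Complex.I) * hn
      exact mul_right_cancel₀ hpi h3
    exact_mod_cast h2
  rw [geom_sum_eq hz]
  have hpow : Complex.exp (2 * (Real.pi:ℂ) * Complex.I * m / d) ^ d = 1 := by
    rw [← Complex.exp_nat_mul, Complex.exp_eq_one_iff]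
    exact ⟨m, by field_simp⟩
  simp [hpow]

lemma parseval (d : ℕ) (hd : 0 < d) (A : ℕ → ℝ) :
    ∑ t ∈ Finset.range d, ‖∑ i ∈ Finset.range d,
        (A i : ℂ) * Complex.exp (2 * (Real.pi:ℂ) * Complex.I * i * t / d)‖ ^ 2
      = d * ∑ i ∈ Finset.range d, (A i) ^ 2 := by
  have hd' : (d:ℂ) ≠ 0 := Nat.cast_ne_zero.mpr hd.ne'
  -- express as real part of complex computation
  have key : ∀ t : ℕ, (‖∑ i ∈ Finset.range d,
        (A i : ℂ) * Complex.exp (2 * (Real.pi:ℂ) * Complex.I * i * t / d)‖ ^ 2 : ℂ)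
      = ∑ i ∈ Finset.range d, ∑ j ∈ Finset.range d,
          (A i : ℂ) * (A j : ℂ) *
            Complex.exp (2 * (Real.pi:ℂ) * Complex.I * ((i : ℤ) - (j : ℤ)) / d) ^ t := by
    intro t
    set S := ∑ i ∈ Finset.range d, (A i : ℂ) * Complex.exp (2 * (Real.pi:ℂ) * Complex.I * i * t / d) with hS
    have h1 : ((‖S‖) ^ 2 : ℂ) = S * (starRingEnd ℂ) S := by
      rw [Complex.mul_conj]
      norm_cast
      exact Complex.sq_norm S
    rw [h1, hS, map_sum, Finset.sum_mul_sum]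
    refine Finset.sum_congr rfl fun i _ => Finset.sum_congr rfl fun j _ => ?_
    rw [map_mul, Complex.conj_ofReal, ← Complex.exp_conj, ← Complex.exp_nat_mul]
    have harg : (2 * (Real.pi:ℂ) * Complex.I * i * t / d)
        + (starRingEnd ℂ) (2 * (Real.pi:ℂ) * Complex.I * j * t / d)
        = (t : ℂ) * (2 * (Real.pi:ℂ) * Complex.I * ((i : ℤ) - (j : ℤ)) / d) := by
      simp only [map_div₀, map_mul, Complex.conj_I, Complex.conj_ofReal, map_ofNat,
        Complex.conj_natCast]
      push_cast
      field_simp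
      ring
    calc (A i : ℂ) * Complex.exp (2 * (Real.pi:ℂ) * Complex.I * i * t / d)
          * ((A j : ℂ) * Complex.exp ((starRingEnd ℂ) (2 * (Real.pi:ℂ) * Complex.I * j * t / d)))
        = (A i : ℂ) * (A j : ℂ) * Complex.exp ((2 * (Real.pi:ℂ) * Complex.I * i * t / d)
            + (starRingEnd ℂ) (2 * (Real.pi:ℂ) * Complex.I * j * t / d)) := by
          rw [Complex.exp_add]; ring
      _ = _ := by rw [harg]
  have main : ((∑ t ∈ Finset.range d, ‖∑ i ∈ Finset.range d,
        (A i : ℂ) * Complex.exp (2 * (Real.pi:ℂ) * Complex.I * i * t / d)‖ ^ 2 : ℝ) : ℂ)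
      = (d : ℂ) * ∑ i ∈ Finset.range d, ((A i : ℂ)) ^ 2 := by
    push_cast
    rw [Finset.sum_congr rfl fun t _ => key t]
    rw [Finset.sum_comm]
    rw [Finset.sum_congr rfl fun i _ => Finset.sum_comm]
    rw [Finset.mul_sum]
    refine Finset.sum_congr rfl fun i hi => ?_
    have hstep : ∀ j ∈ Finset.range d,
        (∑ t ∈ Finset.range d, (A i : ℂ) * (A j : ℂ) *
          Complex.exp (2 * (Real.pi:ℂ) * Complex.I * ((i : ℤ) - (j : ℤ)) / d) ^ t)
        = (A i : ℂ) * (A j : ℂ) *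
          ∑ t ∈ Finset.range d, Complex.exp (2 * (Real.pi:ℂ) * Complex.I * ((i : ℤ) - (j : ℤ)) / d) ^ t := by
      intro j _
      rw [Finset.mul_sum]
    rw [Finset.sum_congr rfl hstep]
    rw [Finset.sum_eq_single_of_mem i hi]
    · rw [sub_self, mul_zero, zero_div, Complex.exp_zero]
      simp
      ring
    · intro j hj hne
      have hmem := Finset.mem_range.mp hj
      have himem := Finset.mem_range.mp hi
      have hcast : (((i:ℤ)):ℂ) - (((j:ℤ)):ℂ) = ((((i:ℤ) - (j:ℤ)) : ℤ) : ℂ) := by push_cast; ring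
      rw [hcast, orth d hd ((i:ℤ) - (j:ℤ)), mul_zero]
      intro hdvd
      have hne' : (i:ℤ) - (j:ℤ) ≠ 0 := by
        intro h0
        exact hne (by omega)
      have := Int.le_of_dvd (abs_pos.mpr hne') ((dvd_abs _ _).mpr hdvd)
      have : |(i:ℤ) - (j:ℤ)| < d := by
        rw [abs_lt]
        omega
      omega
  exact_mod_cast main

lemma fold (d : ℕ) (hd : 0 < d) (x : ℕ → ℝ) (t : ℕ) :
    PSD (3*d) x (3*t) = ‖∑ i ∈ Finset.range d,
        ((x i + x (i+d) + x (i+2*d) : ℝ) : ℂ)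
          * Complex.exp (2 * (Real.pi:ℂ) * Complex.I * i * t / d)‖ ^ 2 := by
  have hd' : (d:ℂ) ≠ 0 := Nat.cast_ne_zero.mpr hd.ne'
  have hone : ∀ n : ℤ, Complex.exp ((n:ℂ) * (2 * (Real.pi:ℂ) * Complex.I)) = 1 :=
    Complex.exp_int_mul_two_pi_mul_I
  have hmain : ∑ α ∈ Finset.range (3*d), (x α : ℂ)
        * Complex.exp (2 * (Real.pi:ℂ) * Complex.I * α * (3*t : ℕ) / (3*d : ℕ))
      = ∑ i ∈ Finset.range d, ((x i + x (i+d) + x (i+2*d) : ℝ) : ℂ)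
          * Complex.exp (2 * (Real.pi:ℂ) * Complex.I * i * t / d) := by
    have hterm : ∀ α : ℕ, (x α : ℂ)
        * Complex.exp (2 * (Real.pi:ℂ) * Complex.I * α * (3*t : ℕ) / (3*d : ℕ))
        = (x α : ℂ) * Complex.exp (2 * (Real.pi:ℂ) * Complex.I * α * t / d) := by
      intro α
      congr 2
      push_cast
      field_simp
    rw [Finset.sum_congr rfl fun α _ => hterm α]
    rw [show 3*d = d + (d + d) from by ring, Finset.sum_range_add, Finset.sum_range_add]
    rw [← Finset.sum_add_distrib, ← Finset.sum_add_distrib]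
    refine Finset.sum_congr rfl fun i hi => ?_
    have e1 : Complex.exp (2 * (Real.pi:ℂ) * Complex.I * ((d + i : ℕ):ℂ) * t / d)
        = Complex.exp (2 * (Real.pi:ℂ) * Complex.I * (i:ℂ) * t / d) := by
      rw [show 2 * (Real.pi:ℂ) * Complex.I * ((d + i : ℕ):ℂ) * t / d
          = 2 * (Real.pi:ℂ) * Complex.I * (i:ℂ) * t / d
            + (((t:ℤ)):ℂ) * (2 * (Real.pi:ℂ) * Complex.I) from by push_cast; field_simp; ring]
      rw [Complex.exp_add, hone, mul_one]
    have e2 : Complex.exp (2 * (Real.pi:ℂ) * Complex.I * ((d + (d + i) : ℕ):ℂ) * t / d)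
        = Complex.exp (2 * (Real.pi:ℂ) * Complex.I * (i:ℂ) * t / d) := by
      rw [show 2 * (Real.pi:ℂ) * Complex.I * ((d + (d + i) : ℕ):ℂ) * t / d
          = 2 * (Real.pi:ℂ) * Complex.I * (i:ℂ) * t / d
            + (((2*t:ℤ)):ℂ) * (2 * (Real.pi:ℂ) * Complex.I) from by push_cast; field_simp; ring]
      rw [Complex.exp_add, hone, mul_one]
    rw [e1, e2]
    rw [show d + (d + i) = i + 2*d from by omega, show d + i = i + d from by omega]
    push_cast
    ring
  unfold PSD
  rw [hmain]

/-- Horizontal constraint for `v = 3d`. -/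
theorem stmt9 (v d : ℕ) (hv : Odd v) (hv0 : 0 < v) (hdm : v = 3 * d)
    (a b : ℕ → ℝ)
    (ha : ∀ i, a i = -1 ∨ a i = 1) (hb : ∀ i, b i = -1 ∨ b i = 1)
    (hpsd : ∀ s : ℕ, 1 ≤ s → s ≤ v - 1 → PSD v a s + PSD v b s = 2 * v - 2)
    (hpsd0 : PSD v a 0 + PSD v b 0 = 4 * v - 2) :
    ∑ i ∈ Finset.range d,
        ((a i + a (i + d) + a (i + 2 * d)) ^ 2 + (b i + b (i + d) + b (i + 2 * d)) ^ 2)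
      = 2 * (v : ℝ) + 4 := by
  subst hdm
  have hd : 0 < d := by omega
  have hdR : (d : ℝ) ≠ 0 := Nat.cast_ne_zero.mpr hd.ne'
  have hsum : ∑ t ∈ Finset.range d, (PSD (3*d) a (3*t) + PSD (3*d) b (3*t))
      = (d : ℝ) * ∑ i ∈ Finset.range d,
          ((a i + a (i + d) + a (i + 2 * d)) ^ 2 + (b i + b (i + d) + b (i + 2 * d)) ^ 2) := by
    calc ∑ t ∈ Finset.range d, (PSD (3*d) a (3*t) + PSD (3*d) b (3*t))
        = ∑ t ∈ Finset.range d, (‖∑ i ∈ Finset.range d,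
            ((a i + a (i+d) + a (i+2*d) : ℝ) : ℂ)
              * Complex.exp (2 * (Real.pi:ℂ) * Complex.I * i * t / d)‖ ^ 2
          + ‖∑ i ∈ Finset.range d,
            ((b i + b (i+d) + b (i+2*d) : ℝ) : ℂ)
              * Complex.exp (2 * (Real.pi:ℂ) * Complex.I * i * t / d)‖ ^ 2) := by
          exact Finset.sum_congr rfl fun t _ => by rw [fold d hd a t, fold d hd b t]
      _ = (d : ℝ) * ∑ i ∈ Finset.range d, (a i + a (i+d) + a (i+2*d)) ^ 2
          + (d : ℝ) * ∑ i ∈ Finset.range d, (b i + b (i+d) + b (i+2*d)) ^ 2 := by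
          rw [Finset.sum_add_distrib,
            parseval d hd (fun i => a i + a (i+d) + a (i+2*d)),
            parseval d hd (fun i => b i + b (i+d) + b (i+2*d))]
      _ = _ := by rw [Finset.sum_add_distrib]; ring
  have hval : ∑ t ∈ Finset.range d, (PSD (3*d) a (3*t) + PSD (3*d) b (3*t))
      = (4 * (3*(d:ℝ)) - 2) + ((d:ℝ) - 1) * (2 * (3*(d:ℝ)) - 2) := by
    obtain ⟨d', rfl⟩ : ∃ d', d = d' + 1 := ⟨d - 1, by omega⟩
    rw [Finset.sum_range_succ']
    have hz : 3 * 0 = 0 := by norm_num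
    rw [hz]
    have hrest : ∀ t ∈ Finset.range d',
        PSD (3*(d'+1)) a (3*(t+1)) + PSD (3*(d'+1)) b (3*(t+1)) = 2 * ((3*(d'+1) : ℕ) : ℝ) - 2 := by
      intro t ht
      have ht' := Finset.mem_range.mp ht
      exact hpsd (3*(t+1)) (by omega) (by omega)
    rw [Finset.sum_congr rfl hrest, Finset.sum_const, Finset.card_range, hpsd0]
    push_cast
    ring
  rw [hval] at hsum
  have : (d : ℝ) * ∑ i ∈ Finset.range d,
      ((a i + a (i + d) + a (i + 2 * d)) ^ 2 + (b i + b (i + d) + b (i + 2 * d)) ^ 2)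
      = (d : ℝ) * (2 * ((3*d : ℕ) : ℝ) + 4) := by
    rw [← hsum]
    push_cast
    ring
  exact mul_left_cancel₀ hdR this
end
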